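/- Let K be a compact subset of a Banach space X, φ : ℕ → ℝ with φ(n) → ∞, and γ_n = 2^{φ(n)}. Then for all n sufficiently large (depending only on rad(K) and the growth of φ), d_n^{γ_n}(K)_X ≤ ε_{n·⌈φ(n)/2⌉}(K)_X. -/

import Mathlib

/-- `N` is a norm on `ℝ^n`. -/
def IsNorm {n : ℕ} (N : (Fin n → ℝ) → ℝ) : Prop :=
  (∀ y, N y = 0 ↔ y = 0) ∧ (∀ (a : ℝ) (y), N (a • y) = |a| * N y) ∧
    (∀ y z, N (y + z) ≤ N y + N z)

variable {X : Type*} [NormedAddCommGroup X] [NormedSpace ℝ X] [CompleteSpace X]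

/-- The fixed Lipschitz width `d^γ(K, Y_n)_X` for the norm `N` on `ℝ^n`. -/
noncomputable def fixedLipWidth {n : ℕ} (K : Set X) (N : (Fin n → ℝ) → ℝ) (γ : ℝ) : ℝ :=
  ⨅ L : {L : (Fin n → ℝ) → X //
      ∀ y y', N y ≤ 1 → N y' ≤ 1 → ‖L y - L y'‖ ≤ γ * N (y - y')},
    ⨆ f : K, ⨅ y : {y : Fin n → ℝ // N y ≤ 1}, ‖(f : X) - L.1 y.1‖

/-- The Lipschitz width `d_n^γ(K)_X`. -/
noncomputable def lipWidth (K : Set X) (n : ℕ) (γ : ℝ) : ℝ :=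
  ⨅ N : {N : (Fin n → ℝ) → ℝ // IsNorm N}, fixedLipWidth K N.1 γ

/-- The entropy number `ε_n(K)_X`. -/
noncomputable def entropyNum (K : Set X) (n : ℕ) : ℝ :=
  sInf {ε : ℝ | 0 < ε ∧ ∃ g : Fin (2 ^ n) → X, K ⊆ ⋃ j, Metric.closedBall (g j) ε}

/-- The Chebyshev radius of `K`. -/
noncomputable def chebRad (K : Set X) : ℝ :=
  ⨅ g : X, ⨆ f : K, ‖g - (f : X)‖

open Classical in
lemma key_lemma (K : Set X) (f₀ : X) (R : ℝ) (hR : 0 ≤ R)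
    (hKR : K ⊆ Metric.closedBall f₀ R) (n k : ℕ) (γ ε : ℝ)
    (hγ : 2 * (2 * R + 1) * 2 ^ k ≤ γ) (hε : 0 < ε) (hεR : ε ≤ R + 1)
    (g : Fin (2 ^ (n * k)) → X) (hg : K ⊆ ⋃ j, Metric.closedBall (g j) ε) :
    lipWidth K n γ ≤ ε := by
  have htk : (0:ℝ) < 2 ^ k := by positivity
  set N : (Fin n → ℝ) → ℝ := fun y => ‖y‖ with hNdef
  have hN : IsNorm N := ⟨fun y => norm_eq_zero,
    fun a y => by simp [N, norm_smul, Real.norm_eq_abs], fun y z => norm_add_le y z⟩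
  obtain ⟨e⟩ : Nonempty (Fin (2 ^ (n * k)) ≃ (Fin n → Fin (2 ^ k))) :=
    ⟨Fintype.equivOfCardEq (by simp [pow_mul, pow_right_comm])⟩
  set P : Fin (2 ^ (n * k)) → (Fin n → ℝ) :=
    fun j i => -1 + (2 * ((e j i : ℕ) : ℝ) + 1) / 2 ^ k with hPdef
  have hP1 : ∀ j, ‖P j‖ ≤ 1 := by
    intro j
    rw [pi_norm_le_iff_of_nonneg zero_le_one]
    intro i
    have h1 : ((e j i : ℕ) : ℝ) ≤ 2 ^ k - 1 := by
      have := (e j i).isLt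
      have : ((e j i : ℕ) : ℝ) ≤ (2:ℝ) ^ k - 1 := by
        push_cast
        have : ((e j i : ℕ) : ℝ) + 1 ≤ ((2:ℕ):ℝ) ^ k := by exact_mod_cast this
        push_cast at this; linarith
      exact this
    have h0 : (0:ℝ) ≤ ((e j i : ℕ) : ℝ) := Nat.cast_nonneg _
    rw [Real.norm_eq_abs, abs_le]
    constructor
    · have : (0:ℝ) ≤ (2 * ((e j i : ℕ) : ℝ) + 1) / 2 ^ k := by positivity
      simp only [P]; linarith
    · have h2 : (2 * ((e j i : ℕ) : ℝ) + 1) / 2 ^ k ≤ 2 := by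
        rw [div_le_iff₀ htk]; linarith
      simp only [P]; linarith
  have hPsep : ∀ j j', j ≠ j' → 2 / 2 ^ k ≤ ‖P j - P j'‖ := by
    intro j j' hjj
    have : e j ≠ e j' := fun h => hjj (e.injective h)
    obtain ⟨i, hi⟩ := Function.ne_iff.mp this
    have hi' : ((e j i : ℕ) : ℤ) ≠ ((e j' i : ℕ) : ℤ) := by
      exact_mod_cast fun h => hi (Fin.ext (by exact_mod_cast h))
    have h1 : (1:ℤ) ≤ |((e j i : ℕ) : ℤ) - ((e j' i : ℕ) : ℤ)| :=
      Int.one_le_abs (sub_ne_zero.mpr hi')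
    have h1' : (1:ℝ) ≤ |((e j i : ℕ) : ℝ) - ((e j' i : ℕ) : ℝ)| := by
      exact_mod_cast h1
    calc 2 / 2 ^ k = 2 * 1 / 2 ^ k := by ring
      _ ≤ 2 * |((e j i : ℕ) : ℝ) - ((e j' i : ℕ) : ℝ)| / 2 ^ k := by gcongr
      _ = |(P j - P j') i| := by
          have hcomp : (P j - P j') i
              = 2 * (((e j i : ℕ) : ℝ) - ((e j' i : ℕ) : ℝ)) / 2 ^ k := by
            simp only [P, Pi.sub_apply]
            field_simp
            ring
          rw [hcomp, abs_div, abs_mul, abs_two, abs_of_pos htk]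
      _ ≤ ‖P j - P j'‖ := norm_le_pi_norm (P j - P j') i
  set c : Fin (2 ^ (n * k)) → X :=
    fun j => if (K ∩ Metric.closedBall (g j) ε).Nonempty then g j else f₀ with hcdef
  have hc : ∀ j, ‖c j - f₀‖ ≤ 2 * R + 1 := by
    intro j
    simp only [c]
    split_ifs with h
    · obtain ⟨x, hxK, hxb⟩ := h
      have h1 : dist x (g j) ≤ ε := Metric.mem_closedBall.mp hxb
      have h2 : dist x f₀ ≤ R := Metric.mem_closedBall.mp (hKR hxK)
      calc ‖g j - f₀‖ = dist (g j) f₀ := (dist_eq_norm _ _).symm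
        _ ≤ dist (g j) x + dist x f₀ := dist_triangle _ _ _
        _ ≤ ε + R := by rw [dist_comm]; exact add_le_add h1 h2
        _ ≤ 2 * R + 1 := by linarith
    · simp; linarith
  set θ : Fin (2 ^ (n * k)) → (Fin n → ℝ) → ℝ :=
    fun j y => max (1 - 2 ^ k * ‖y - P j‖) 0 with hθdef
  have hθ_lip : ∀ j y y', |θ j y - θ j y'| ≤ 2 ^ k * ‖y - y'‖ := by
    intro j y y'
    calc |θ j y - θ j y'| ≤ |(1 - 2 ^ k * ‖y - P j‖) - (1 - 2 ^ k * ‖y' - P j‖)| :=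
          abs_max_sub_max_le_abs _ _ _
      _ = 2 ^ k * |‖y - P j‖ - ‖y' - P j‖| := by
          have heq : (1 - 2 ^ k * ‖y - P j‖) - (1 - 2 ^ k * ‖y' - P j‖)
              = 2 ^ k * (‖y' - P j‖ - ‖y - P j‖) := by ring
          rw [heq, abs_mul, abs_of_pos htk, abs_sub_comm]
      _ ≤ 2 ^ k * ‖y - y'‖ := by
          gcongr
          have := abs_norm_sub_norm_le (y - P j) (y' - P j)
          simpa using this
  have hθ_ne : ∀ j y, θ j y ≠ 0 → ‖y - P j‖ < 1 / 2 ^ k := by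
    intro j y h
    by_contra hb
    push_neg at hb
    have : 1 - 2 ^ k * ‖y - P j‖ ≤ 0 := by
      rw [div_le_iff₀ htk] at hb; nlinarith
    exact h (max_eq_right this)
  have hθ_nonneg : ∀ j y, 0 ≤ θ j y := fun j y => le_max_right _ _
  have hθ_le_one : ∀ j y, θ j y ≤ 1 := by
    intro j y
    apply max_le _ zero_le_one
    nlinarith [norm_nonneg (y - P j)]
  have hθ_self : ∀ j, θ j (P j) = 1 := by
    intro j; simp [θ]
  have hθ_other : ∀ j j', j' ≠ j → θ j' (P j) = 0 := by
    intro j j' hjj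
    apply max_eq_right
    have := hPsep j j' (fun h => hjj h.symm)
    rw [div_le_iff₀ htk] at this
    have : (2:ℝ) ≤ 2 ^ k * ‖P j - P j'‖ := by linarith [this]
    rw [norm_sub_rev] at this
    linarith
  have hθ_disj : ∀ y j j', θ j y ≠ 0 → θ j' y ≠ 0 → j = j' := by
    intro y j j' h h'
    by_contra hjj
    have h1 := hθ_ne j y h
    have h2 := hθ_ne j' y h'
    have := hPsep j j' hjj
    have htri : ‖P j - P j'‖ ≤ ‖P j - y‖ + ‖y - P j'‖ := by
      have := norm_add_le (P j - y) (y - P j')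
      simpa using this
    rw [norm_sub_rev] at h1
    have : (2:ℝ) / 2 ^ k < 1 / 2 ^ k + 1 / 2 ^ k := by
      calc (2:ℝ) / 2 ^ k ≤ ‖P j - P j'‖ := hPsep j j' hjj
        _ ≤ ‖P j - y‖ + ‖y - P j'‖ := htri
        _ < 1 / 2 ^ k + 1 / 2 ^ k := add_lt_add h1 h2
    rw [← add_div] at this
    norm_num at this
  set L : (Fin n → ℝ) → X := fun y => f₀ + ∑ j, θ j y • (c j - f₀) with hLdef
  have hL_lip : ∀ y y', ‖L y - L y'‖ ≤ γ * ‖y - y'‖ := by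
    intro y y'
    have hdiff : L y - L y' = ∑ j, (θ j y - θ j y') • (c j - f₀) := by
      simp only [L, add_sub_add_left_eq_sub, ← Finset.sum_sub_distrib, sub_smul]
    set s : Finset (Fin (2 ^ (n * k))) :=
      Finset.univ.filter (fun j => θ j y ≠ 0 ∨ θ j y' ≠ 0) with hsdef
    have hsum : ∑ j, (θ j y - θ j y') • (c j - f₀)
        = ∑ j ∈ s, (θ j y - θ j y') • (c j - f₀) := by
      symm
      apply Finset.sum_subset (Finset.filter_subset _ _)
      intro j _ hj
      simp only [s, Finset.mem_filter, Finset.mem_univ, true_and, not_or, not_not] at hj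
      rw [hj.1, hj.2, sub_self, zero_smul]
    have hcard : s.card ≤ 2 := by
      have h1 : (Finset.univ.filter (fun j => θ j y ≠ 0)).card ≤ 1 := by
        apply Finset.card_le_one.mpr
        intro a ha b hb
        simp only [Finset.mem_filter] at ha hb
        exact hθ_disj y a b ha.2 hb.2
      have h2 : (Finset.univ.filter (fun j => θ j y' ≠ 0)).card ≤ 1 := by
        apply Finset.card_le_one.mpr
        intro a ha b hb
        simp only [Finset.mem_filter] at ha hb
        exact hθ_disj y' a b ha.2 hb.2
      have hsub : s ⊆ Finset.univ.filter (fun j => θ j y ≠ 0)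
          ∪ Finset.univ.filter (fun j => θ j y' ≠ 0) := by
        intro j hj
        simp only [s, Finset.mem_filter, Finset.mem_univ, true_and] at hj
        simp only [Finset.mem_union, Finset.mem_filter, Finset.mem_univ, true_and]
        exact hj
      calc s.card ≤ _ := Finset.card_le_card hsub
        _ ≤ _ := Finset.card_union_le _ _
        _ ≤ 2 := by omega
    calc ‖L y - L y'‖ = ‖∑ j ∈ s, (θ j y - θ j y') • (c j - f₀)‖ := by rw [hdiff, hsum]
      _ ≤ ∑ j ∈ s, ‖(θ j y - θ j y') • (c j - f₀)‖ := norm_sum_le _ _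
      _ ≤ ∑ _j ∈ s, (2 ^ k * ‖y - y'‖) * (2 * R + 1) := by
          apply Finset.sum_le_sum
          intro j _
          rw [norm_smul, Real.norm_eq_abs]
          exact mul_le_mul (hθ_lip j y y') (hc j) (norm_nonneg _)
            (by positivity)
      _ = s.card * ((2 ^ k * ‖y - y'‖) * (2 * R + 1)) := by
          rw [Finset.sum_const, nsmul_eq_mul]
      _ ≤ 2 * ((2 ^ k * ‖y - y'‖) * (2 * R + 1)) := by
          apply mul_le_mul_of_nonneg_right _ (by positivity)
          exact_mod_cast hcard
      _ = (2 * (2 * R + 1) * 2 ^ k) * ‖y - y'‖ := by ring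
      _ ≤ γ * ‖y - y'‖ := mul_le_mul_of_nonneg_right hγ (norm_nonneg _)
  -- the approximation property
  have hL_cov : ∀ f ∈ K, ∃ j, ‖f - L (P j)‖ ≤ ε := by
    intro f hf
    obtain ⟨j, hfj⟩ := Set.mem_iUnion.mp (hg hf)
    refine ⟨j, ?_⟩
    have hne : (K ∩ Metric.closedBall (g j) ε).Nonempty := ⟨f, hf, hfj⟩
    have hLPj : L (P j) = c j := by
      have : ∑ j', θ j' (P j) • (c j' - f₀) = c j - f₀ := by
        rw [Finset.sum_eq_single j]
        · rw [hθ_self, one_smul]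
        · intro b _ hb
          rw [hθ_other j b hb, zero_smul]
        · intro h; exact absurd (Finset.mem_univ j) h
      simp only [L, this]
      abel
    rw [hLPj]
    have : c j = g j := if_pos hne
    rw [this, ← dist_eq_norm]
    exact Metric.mem_closedBall.mp hfj
  -- assemble
  have bdd1 : BddBelow (Set.range fun (N' : {N : (Fin n → ℝ) → ℝ // IsNorm N}) =>
      fixedLipWidth K N'.1 γ) := by
    refine ⟨0, ?_⟩
    rintro x ⟨N', rfl⟩
    exact Real.iInf_nonneg fun L => Real.iSup_nonneg fun f =>
      Real.iInf_nonneg fun y => norm_nonneg _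
  have step1 : lipWidth K n γ ≤ fixedLipWidth K N γ := ciInf_le bdd1 ⟨N, hN⟩
  have hLmem : ∀ y y', N y ≤ 1 → N y' ≤ 1 → ‖L y - L y'‖ ≤ γ * N (y - y') :=
    fun y y' _ _ => hL_lip y y'
  have bdd2 : BddBelow (Set.range fun (L' : {L : (Fin n → ℝ) → X //
      ∀ y y', N y ≤ 1 → N y' ≤ 1 → ‖L y - L y'‖ ≤ γ * N (y - y')}) =>
      ⨆ f : K, ⨅ y : {y : Fin n → ℝ // N y ≤ 1}, ‖(f : X) - L'.1 y.1‖) := by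
    refine ⟨0, ?_⟩
    rintro x ⟨L', rfl⟩
    exact Real.iSup_nonneg fun f => Real.iInf_nonneg fun y => norm_nonneg _
  have step2 : fixedLipWidth K N γ ≤
      ⨆ f : K, ⨅ y : {y : Fin n → ℝ // N y ≤ 1}, ‖(f : X) - L y.1‖ :=
    ciInf_le bdd2 ⟨L, hLmem⟩
  have step3 : (⨆ f : K, ⨅ y : {y : Fin n → ℝ // N y ≤ 1}, ‖(f : X) - L y.1‖) ≤ ε := by
    apply Real.iSup_le _ hε.le
    intro f
    obtain ⟨j, hj⟩ := hL_cov f f.2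
    apply ciInf_le_of_le _ ⟨P j, hP1 j⟩ hj
    refine ⟨0, ?_⟩
    rintro x ⟨y, rfl⟩
    exact norm_nonneg _
  linarith [step1, step2, step3]

/-- for `γ_n = 2^{φ(n)}` with `φ(n) → ∞`, for all sufficiently large `n`
one has `d_n^{γ_n}(K)_X ≤ ε_{n⌈φ(n)/2⌉}(K)_X`. -/
theorem lipWidth_le_entropy_half (K : Set X) (hK : IsCompact K)
    (φ : ℕ → ℝ) (hφ : Filter.Tendsto φ Filter.atTop Filter.atTop) :
    ∃ n₀ : ℕ, ∀ n ≥ n₀,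
      lipWidth K n ((2 : ℝ) ^ φ n) ≤ entropyNum K (n * ⌈φ n / 2⌉₊) := by
  obtain ⟨r, hr⟩ := hK.isBounded.subset_closedBall 0
  set R := max r 0 with hRdef
  have hR : 0 ≤ R := le_max_right _ _
  have hKR : K ⊆ Metric.closedBall (0:X) R :=
    hr.trans (Metric.closedBall_subset_closedBall (le_max_left _ _))
  set C : ℝ := max 2 (2 * Real.logb 2 (4 * (2 * R + 1))) with hCdef
  obtain ⟨n₀, hn₀⟩ := Filter.eventually_atTop.mp (hφ.eventually_ge_atTop C)
  refine ⟨n₀, fun n hn => ?_⟩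
  have hφn : C ≤ φ n := hn₀ n hn
  have hφ2 : (2:ℝ) ≤ φ n := le_trans (le_max_left _ _) hφn
  have hlog : 2 * Real.logb 2 (4 * (2 * R + 1)) ≤ φ n := le_trans (le_max_right _ _) hφn
  set k := ⌈φ n / 2⌉₊ with hkdef
  have hγ : 2 * (2 * R + 1) * 2 ^ k ≤ (2:ℝ) ^ φ n := by
    have hk1 : (k : ℝ) < φ n / 2 + 1 := Nat.ceil_lt_add_one (by linarith)
    have h2k : (2:ℝ) ^ k ≤ (2:ℝ) ^ (φ n / 2 + 1 : ℝ) := by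
      rw [← Real.rpow_natCast 2 k]
      exact Real.rpow_le_rpow_of_exponent_le one_le_two hk1.le
    have hpos : (0:ℝ) < 4 * (2 * R + 1) := by linarith
    have h4 : 4 * (2 * R + 1) ≤ (2:ℝ) ^ (φ n / 2 : ℝ) := by
      rw [← Real.rpow_logb two_pos (by norm_num) hpos]
      exact Real.rpow_le_rpow_of_exponent_le one_le_two (by linarith)
    calc 2 * (2 * R + 1) * 2 ^ k
        ≤ 2 * (2 * R + 1) * (2:ℝ) ^ (φ n / 2 + 1 : ℝ) := by
          apply mul_le_mul_of_nonneg_left h2k (by positivity)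
      _ = (4 * (2 * R + 1)) * (2:ℝ) ^ (φ n / 2 : ℝ) := by
          rw [Real.rpow_add two_pos, Real.rpow_one]; ring
      _ ≤ (2:ℝ) ^ (φ n / 2 : ℝ) * (2:ℝ) ^ (φ n / 2 : ℝ) :=
          mul_le_mul_of_nonneg_right h4 (by positivity)
      _ = (2:ℝ) ^ φ n := by
          rw [← Real.rpow_add two_pos]; ring_nf
  have hcov0 : K ⊆ ⋃ _j : Fin (2 ^ (n * k)), Metric.closedBall (0:X) (R + 1) := by
    intro x hx
    exact Set.mem_iUnion.mpr ⟨⟨0, Nat.two_pow_pos _⟩,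
      Metric.closedBall_subset_closedBall (by linarith) (hKR hx)⟩
  have hSne : ({ε : ℝ | 0 < ε ∧ ∃ g : Fin (2 ^ (n * k)) → X,
      K ⊆ ⋃ j, Metric.closedBall (g j) ε}).Nonempty :=
    ⟨R + 1, by linarith, fun _ => 0, hcov0⟩
  rw [entropyNum]
  apply le_csInf hSne
  rintro ε ⟨hε, g, hg⟩
  rcases le_or_gt ε (R + 1) with h | h
  · exact key_lemma K 0 R hR hKR n k _ ε hγ hε h g hg
  · exact (key_lemma K 0 R hR hKR n k _ (R+1) hγ (by linarith) le_rfl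
      (fun _ => 0) hcov0).trans h.le
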